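/- If k ≥ 4 and n ≥ k + 1, then ex(K_n, K_k − e) = ex(K_n, K_{k−1}) = e(T_{n,k−2}), where K_k − e is the complete graph on k vertices minus one edge and T_{n,k−2} is the Turán graph. -/

import Mathlib

open Classical

noncomputable section

/-- The Turán number `ex(K_n, K_m)`: the maximum number of edges of a
`K_m`-free subgraph of `K_n`. -/
noncomputable def exNum (n m : ℕ) : ℕ :=
  sSup {e | ∃ H : SimpleGraph (Fin n), H.CliqueFree m ∧ H.edgeSet.ncard = e}

/-- `G` contains a copy of `H`. -/
def ContainsCopy {V W : Type*} (G : SimpleGraph V) (H : SimpleGraph W) : Prop :=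
  ∃ f : W → V, Function.Injective f ∧ ∀ a b, H.Adj a b → G.Adj (f a) (f b)

/-- The Turán number `ex(K_n, H)`: the maximum number of edges of an `H`-free
subgraph of `K_n`. -/
noncomputable def exNumH (n : ℕ) {W : Type*} (H : SimpleGraph W) : ℕ :=
  sSup {e | ∃ G : SimpleGraph (Fin n), ¬ ContainsCopy G H ∧ G.edgeSet.ncard = e}

open Finset SimpleGraph

section Aux

lemma ncard_eq_card_edgeFinset {V : Type*} [Fintype V] (G : SimpleGraph V)
    [Fintype G.edgeSet] : G.edgeSet.ncard = #G.edgeFinset := by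
  rw [← coe_edgeFinset, Set.ncard_coe_finset]

lemma count_mod (r i : ℕ) (hr : 0 < r) (hi : i < r) (N : ℕ) :
    #((Finset.range N).filter fun w => w % r = i) = N / r + if i < N % r then 1 else 0 := by
  induction N with
  | zero => simp
  | succ N ih =>
    rw [Finset.range_add_one, Finset.filter_insert]
    have hdm := Nat.div_add_mod N r
    have hmlt : N % r < r := Nat.mod_lt _ hr
    rcases eq_or_lt_of_le (Nat.succ_le_of_lt hmlt) with he | hlt
    · have h1 : (N+1) / r = N / r + 1 ∧ (N+1) % r = 0 := by
        have hmm : r * (N/r+1) = r*(N/r) + r := by ring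
        rw [Nat.div_mod_unique hr]; constructor <;> omega
      by_cases hNi : N % r = i
      · rw [if_pos hNi, Finset.card_insert_of_notMem (by simp), ih]
        rw [h1.1, h1.2]
        have : ¬ i < N % r := by omega
        simp [this]
      · rw [if_neg hNi, ih, h1.1, h1.2]
        have h2 : i < N % r := by omega
        simp [h2]
    · have h1 : (N+1) / r = N / r ∧ (N+1) % r = N % r + 1 := by
        rw [Nat.div_mod_unique hr]; constructor <;> omega
      by_cases hNi : N % r = i
      · rw [if_pos hNi, Finset.card_insert_of_notMem (by simp), ih, h1.1, h1.2]
        have h2 : ¬ i < N % r := by omega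
        have h3 : i < N % r + 1 := by omega
        simp [h2, h3]
      · rw [if_neg hNi, ih, h1.1, h1.2]
        by_cases h2 : i < N % r
        · simp [h2, Nat.lt_succ_of_lt h2]
        · have h3 : ¬ i < N % r + 1 := by omega
          simp [h2, h3]

lemma turan_formula (N r : ℕ) (hr : 0 < r) :
    2 * (SimpleGraph.turanGraph N r).edgeSet.ncard
      + (N / r) * N + (N / r + 1) * (N % r) = N * N := by
  classical
  set q := N / r with hq
  set s := N % r with hs
  have hdm : r * q + s = N := Nat.div_add_mod N r
  have hsr : s < r := Nat.mod_lt _ hr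
  set cF : ℕ → ℕ := fun i => #(univ.filter fun v : Fin N => (v : ℕ) % r = i) with hcF
  have hc : ∀ i, cF i = #((Finset.range N).filter fun w => w % r = i) := by
    intro i
    apply Finset.card_bij (fun (v : Fin N) _ => (v : ℕ))
    · intro a ha
      simp only [Finset.mem_filter, Finset.mem_univ, true_and] at ha
      simp only [Finset.mem_filter, Finset.mem_range]
      exact ⟨a.isLt, ha⟩
    · intro a _ b _ h; exact Fin.ext h
    · intro b hb
      simp at hb
      exact ⟨⟨b, hb.1⟩, by simp [hb.2]⟩
  have hdegc : ∀ v : Fin N, (turanGraph N r).degree v + cF ((v : ℕ) % r) = N := by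
    intro v
    have h1 : (turanGraph N r).degree v
        = #(univ.filter fun w : Fin N => ¬ ((w : ℕ) % r = (v : ℕ) % r)) := by
      rw [← card_neighborFinset_eq_degree, neighborFinset_eq_filter]
      congr 1
      apply Finset.filter_congr
      intro w _
      simp [turanGraph, ne_comm]
    have h2 : cF ((v : ℕ) % r) = #(univ.filter fun w : Fin N => (w : ℕ) % r = (v : ℕ) % r) := rfl
    rw [h1, h2, add_comm]
    rw [Finset.card_filter_add_card_filter_not]
    simp
  have hsum : ∑ v : Fin N, ((turanGraph N r).degree v + cF ((v : ℕ) % r)) = N * N := by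
    rw [Finset.sum_congr rfl (fun v _ => hdegc v)]
    simp [Finset.card_univ, mul_comm]
  rw [Finset.sum_add_distrib] at hsum
  rw [sum_degrees_eq_twice_card_edges] at hsum
  have hfib : ∑ v : Fin N, cF ((v : ℕ) % r) = ∑ i ∈ Finset.range r, cF i * cF i := by
    rw [← Finset.sum_fiberwise_of_maps_to (g := fun v : Fin N => (v : ℕ) % r)
      (t := Finset.range r) (fun v _ => Finset.mem_range.2 (Nat.mod_lt _ hr))]
    refine Finset.sum_congr rfl fun i hi => ?_
    have : ∀ v ∈ univ.filter fun v : Fin N => (v : ℕ) % r = i, cF ((v : ℕ) % r) = cF i := by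
      intro v hv; rw [(Finset.mem_filter.1 hv).2]
    rw [Finset.sum_congr rfl this, Finset.sum_const, smul_eq_mul]
  have hcval : ∀ i < r, cF i = q + if i < s then 1 else 0 := by
    intro i hi; rw [hc i, count_mod r i hr hi]
  have hsq : ∑ i ∈ Finset.range r, cF i * cF i = s * ((q+1)*(q+1)) + (r - s) * (q*q) := by
    have : ∀ i ∈ Finset.range r, cF i * cF i = if i < s then (q+1)*(q+1) else q*q := by
      intro i hi
      rw [hcval i (Finset.mem_range.1 hi)]
      split_ifs <;> ring
    have hfs : (Finset.range r).filter (fun i => i < s) = Finset.range s := by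
      ext i; simp; omega
    have hfn : #((Finset.range r).filter fun i => ¬ i < s) = r - s := by
      have htot := Finset.card_filter_add_card_filter_not
        (s := Finset.range r) (p := fun i => i < s)
      rw [Finset.card_range, hfs, Finset.card_range] at htot
      omega
    rw [Finset.sum_congr rfl this, Finset.sum_ite, Finset.sum_const, Finset.sum_const,
      smul_eq_mul, smul_eq_mul, hfs, Finset.card_range, hfn]
  rw [hfib, hsq] at hsum
  rw [ncard_eq_card_edgeFinset]
  obtain ⟨d, hd⟩ : ∃ d, r = s + d := ⟨r - s, by omega⟩
  have hrs : r - s = d := by omega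
  rw [hrs] at hsum
  rw [hd] at hdm
  zify at hsum hdm ⊢
  linear_combination hsum - (q : ℤ) * hdm

lemma key_arith (r m q s q' s' E : ℕ) (hr : 2 ≤ r) (hm : 1 ≤ m)
    (h1 : m = r*q + s) (h2 : s < r) (h3 : m + r + 1 = r*q' + s') (h4 : s' < r)
    (hE : E ≤ 1) (hE1 : E = 1 → m = r + 1) :
    r*(r+1) + 2*m*(r-1) + m*m + 2*E + q'*(m+r+1) + (q'+1)*s'
      ≤ (m+r+1)*(m+r+1) + q*m + (q+1)*s := by
  have hq2 : 2*q ≤ r*q := Nat.mul_le_mul_right q hr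
  have hcase : (q' = q+1 ∧ s' = s+1) ∨ (q' = q+2 ∧ s' = 0 ∧ s = r-1) := by
    have e1 : r*q' + s' = r*q + s + r + 1 := by omega
    have hlb : q + 1 ≤ q' := by
      by_contra hc
      have : r*q' ≤ r*q := Nat.mul_le_mul_left r (by omega)
      omega
    have hub : q' ≤ q + 2 := by
      by_contra hc
      have h5 : r*(q+3) ≤ r*q' := Nat.mul_le_mul_left r (by omega)
      have h6 : r*(q+3) = r*q + 3*r := by ring
      omega
    rcases (by omega : q' = q + 1 ∨ q' = q + 2) with h | h
    · left
      have h6 : r*(q+1) = r*q + r := by ring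
      rw [h] at e1
      omega
    · right
      have h6 : r*(q+2) = r*q + 2*r := by ring
      rw [h] at e1
      omega
  have hq1 : q + 1 + E ≤ m := by
    rcases Nat.lt_or_ge q 2 with hq | hq
    · interval_cases q
      · simp at h1; rcases (by omega : E = 0 ∨ E = 1) with h|h <;> omega
      · rcases (by omega : E = 0 ∨ E = 1) with h|h
        · omega
        · have := hE1 h; omega
    · have h5 : 2*r ≤ r*q := by
        calc 2*r = r*2 := by ring
        _ ≤ r*q := Nat.mul_le_mul_left r hq
      rcases (by omega : E = 0 ∨ E = 1) with h|h
      · omega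
      · have := hE1 h; omega
  rcases hcase with ⟨hq', hs'⟩ | ⟨hq', hs', hs⟩ <;> subst hq' hs' <;>
    zify [show 1 ≤ r by omega] at h1 hq1 ⊢ <;> nlinarith [h1, hq1]

lemma nbrs_le {k n : ℕ} (hk : 4 ≤ k) (h0 : (0:ℕ) < k) (h1 : (1:ℕ) < k)
    (G : SimpleGraph (Fin n))
    (hG : ¬ ContainsCopy G ((⊤ : SimpleGraph (Fin k)).deleteEdges
      {s((⟨0, h0⟩ : Fin k), (⟨1, h1⟩ : Fin k))}))
    (S : Finset (Fin n)) (hS : G.IsNClique (k-1) S) (v : Fin n) (hv : v ∉ S)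
    [DecidableRel G.Adj] :
    #(S.filter fun u => G.Adj v u) ≤ k - 3 := by
  by_contra hcon
  push_neg at hcon
  set T := S.filter (fun u => G.Adj v u) with hT
  have hTS : T ⊆ S := Finset.filter_subset _ _
  have hcS : #S = k - 1 := hS.2
  have hdiff : #(S \ T) ≤ 1 := by
    rw [Finset.card_sdiff_of_subset hTS]
    have := Finset.card_le_card hTS
    omega
  obtain ⟨u, huS, hsub⟩ : ∃ u ∈ S, S.erase u ⊆ T := by
    rcases (S \ T).eq_empty_or_nonempty with he | ⟨u, hu⟩
    · have hst : S ⊆ T := by rwa [Finset.sdiff_eq_empty_iff_subset] at he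
      obtain ⟨u, hu⟩ : S.Nonempty := Finset.card_pos.1 (by omega)
      exact ⟨u, hu, (Finset.erase_subset _ _).trans hst⟩
    · refine ⟨u, (Finset.mem_sdiff.1 hu).1, fun x hx => ?_⟩
      by_contra hxT
      have hxd : x ∈ S \ T := Finset.mem_sdiff.2 ⟨Finset.mem_of_mem_erase hx, hxT⟩
      exact (Finset.ne_of_mem_erase hx) (Finset.card_le_one.1 hdiff x hxd u hu)
  have hEcard : #(S.erase u) = k - 2 := by
    rw [Finset.card_erase_of_mem huS]; omega
  set e := (S.erase u).equivFin with he
  set f : Fin k → Fin n := fun i =>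
    if hi0 : (i : ℕ) = 0 then v else if hi1 : (i : ℕ) = 1 then u
    else (e.symm ⟨(i : ℕ) - 2, by rw [hEcard]; have := i.isLt; omega⟩ : {x // x ∈ S.erase u}).val
    with hf
  have hf0 : ∀ i : Fin k, (i : ℕ) = 0 → f i = v := by
    intro i hi; simp only [hf]; rw [dif_pos hi]
  have hf1 : ∀ i : Fin k, (i : ℕ) = 1 → f i = u := by
    intro i hi; simp only [hf]; rw [dif_neg (by omega), dif_pos hi]
  have hf2 : ∀ i : Fin k, 2 ≤ (i : ℕ) → f i ∈ S.erase u := by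
    intro i hi; simp only [hf]; rw [dif_neg (by omega), dif_neg (by omega)]
    exact Finset.coe_mem _
  have hf2' : ∀ i : Fin k, (hi : 2 ≤ (i : ℕ)) →
      f i = (e.symm ⟨(i : ℕ) - 2, by rw [hEcard]; have := i.isLt; omega⟩
        : {x // x ∈ S.erase u}).val := by
    intro i hi; simp only [hf]; rw [dif_neg (by omega), dif_neg (by omega)]
  have hvu : v ≠ u := fun h => hv (h ▸ huS)
  have hadjvE : ∀ x ∈ S.erase u, G.Adj v x := by
    intro x hx
    exact (Finset.mem_filter.1 (hsub hx)).2
  have hadjuE : ∀ x ∈ S.erase u, G.Adj u x := by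
    intro x hx
    exact hS.1 (Finset.mem_coe.2 huS) (Finset.mem_coe.2 (Finset.mem_of_mem_erase hx))
      (fun h => (Finset.ne_of_mem_erase hx) h.symm)
  have hadjEE : ∀ x ∈ S.erase u, ∀ y ∈ S.erase u, x ≠ y → G.Adj x y := by
    intro x hx y hy hxy
    exact hS.1 (Finset.mem_coe.2 (Finset.mem_of_mem_erase hx))
      (Finset.mem_coe.2 (Finset.mem_of_mem_erase hy)) hxy
  apply hG
  refine ⟨f, ?_, ?_⟩
  · intro a b hab
    rcases Nat.lt_or_ge (a : ℕ) 2 with ha | ha <;> rcases Nat.lt_or_ge (b : ℕ) 2 with hb | hb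
    · rcases (by omega : (a:ℕ) = 0 ∨ (a:ℕ) = 1) with ha' | ha' <;>
        rcases (by omega : (b:ℕ) = 0 ∨ (b:ℕ) = 1) with hb' | hb'
      · exact Fin.ext (by omega)
      · rw [hf0 a ha', hf1 b hb'] at hab; exact absurd hab hvu
      · rw [hf1 a ha', hf0 b hb'] at hab; exact absurd hab.symm hvu
      · exact Fin.ext (by omega)
    · have hbm := hf2 b hb
      rcases (by omega : (a:ℕ) = 0 ∨ (a:ℕ) = 1) with ha' | ha'
      · rw [hf0 a ha'] at hab
        exact (hv (by rw [hab]; exact Finset.mem_of_mem_erase hbm)).elim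
      · rw [hf1 a ha'] at hab
        exact absurd hab.symm (Finset.ne_of_mem_erase hbm)
    · have ham := hf2 a ha
      rcases (by omega : (b:ℕ) = 0 ∨ (b:ℕ) = 1) with hb' | hb'
      · rw [hf0 b hb'] at hab
        exact (hv (by rw [← hab]; exact Finset.mem_of_mem_erase ham)).elim
      · rw [hf1 b hb'] at hab
        exact absurd hab (Finset.ne_of_mem_erase ham)
    · rw [hf2' a ha, hf2' b hb] at hab
      have := e.symm.injective (Subtype.coe_injective hab)
      have : (a : ℕ) - 2 = (b : ℕ) - 2 := congrArg Fin.val this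
      exact Fin.ext (by omega)
  · intro a b hab
    rw [SimpleGraph.deleteEdges_adj] at hab
    obtain ⟨htop, hne⟩ := hab
    have hab' : a ≠ b := htop.ne
    rw [Set.mem_singleton_iff] at hne
    have hne' : ¬ (((a:ℕ) = 0 ∧ (b:ℕ) = 1) ∨ ((a:ℕ) = 1 ∧ (b:ℕ) = 0)) := by
      intro hc
      apply hne
      rcases hc with ⟨ha1, hb1⟩ | ⟨ha1, hb1⟩
      · rw [Sym2.eq_iff]; left; exact ⟨Fin.ext ha1, Fin.ext hb1⟩
      · rw [Sym2.eq_iff]; right; exact ⟨Fin.ext ha1, Fin.ext hb1⟩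
    rcases Nat.lt_or_ge (a : ℕ) 2 with ha | ha <;> rcases Nat.lt_or_ge (b : ℕ) 2 with hb | hb
    · exfalso
      rcases (by omega : (a:ℕ) = 0 ∨ (a:ℕ) = 1) with ha' | ha' <;>
        rcases (by omega : (b:ℕ) = 0 ∨ (b:ℕ) = 1) with hb' | hb'
      · exact hab' (Fin.ext (by omega))
      · exact hne' (Or.inl ⟨ha', hb'⟩)
      · exact hne' (Or.inr ⟨ha', hb'⟩)
      · exact hab' (Fin.ext (by omega))
    · have hbm := hf2 b hb
      rcases (by omega : (a:ℕ) = 0 ∨ (a:ℕ) = 1) with ha' | ha'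
      · rw [hf0 a ha']; exact hadjvE _ hbm
      · rw [hf1 a ha']; exact hadjuE _ hbm
    · have ham := hf2 a ha
      rcases (by omega : (b:ℕ) = 0 ∨ (b:ℕ) = 1) with hb' | hb'
      · rw [hf0 b hb']; exact (hadjvE _ ham).symm
      · rw [hf1 b hb']; exact (hadjuE _ ham).symm
    · have ham := hf2 a ha
      have hbm := hf2 b hb
      refine hadjEE _ ham _ hbm ?_
      rw [hf2' a ha, hf2' b hb]
      intro hc
      have := e.symm.injective (Subtype.coe_injective hc)
      have : (a : ℕ) - 2 = (b : ℕ) - 2 := congrArg Fin.val this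
      exact hab' (Fin.ext (by omega))

lemma prodNeCard {V : Type*} [DecidableEq V] (S : Finset V) :
    #((S ×ˢ S).filter fun p => p.1 ≠ p.2) + #S = #S * #S := by
  have h1 : (S ×ˢ S).filter (fun p => p.1 = p.2) = S.image (fun a => (a, a)) := by
    ext ⟨x, y⟩
    simp only [Finset.mem_filter, Finset.mem_product, Finset.mem_image, Prod.mk.injEq]
    constructor
    · rintro ⟨⟨hx, -⟩, rfl⟩; exact ⟨x, hx, rfl, rfl⟩
    · rintro ⟨a, ha, rfl, rfl⟩; exact ⟨⟨ha, ha⟩, rfl⟩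
  have h2 := Finset.card_filter_add_card_filter_not
    (s := S ×ˢ S) (p := fun p => p.1 = p.2)
  rw [h1, Finset.card_image_of_injective _ (fun a b h => (Prod.ext_iff.1 h).1),
    Finset.card_product] at h2
  simp only [ne_eq]
  omega

lemma four_split {V : Type*} [Fintype V] [DecidableEq V] (G : SimpleGraph V)
    [DecidableRel G.Adj] (S : Finset V) :
    2 * #G.edgeFinset =
      #(univ.filter fun p : V × V => G.Adj p.1 p.2 ∧ p.1 ∈ S ∧ p.2 ∈ S) +
      #(univ.filter fun p : V × V => G.Adj p.1 p.2 ∧ p.1 ∈ S ∧ p.2 ∉ S) +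
      #(univ.filter fun p : V × V => G.Adj p.1 p.2 ∧ p.1 ∉ S ∧ p.2 ∈ S) +
      #(univ.filter fun p : V × V => G.Adj p.1 p.2 ∧ p.1 ∉ S ∧ p.2 ∉ S) := by
  rw [two_mul_card_edgeFinset]
  have e0 : #(univ.filter fun (p : V × V) => match p with | (x, y) => G.Adj x y) =
      #(univ.filter fun p : V × V => G.Adj p.1 p.2) := rfl
  rw [e0]
  have hA := Finset.card_filter_add_card_filter_not
    (s := univ.filter fun p : V × V => G.Adj p.1 p.2) (p := fun p => p.1 ∈ S)
  have hB := Finset.card_filter_add_card_filter_not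
    (s := univ.filter fun p : V × V => G.Adj p.1 p.2 ∧ p.1 ∈ S) (p := fun p => p.2 ∈ S)
  have hC := Finset.card_filter_add_card_filter_not
    (s := univ.filter fun p : V × V => G.Adj p.1 p.2 ∧ p.1 ∉ S) (p := fun p => p.2 ∈ S)
  simp only [Finset.filter_filter] at hA hB hC
  have r1 : ∀ (q q' : V × V → Prop) [DecidablePred q] [DecidablePred q'],
      (∀ p, q p ↔ q' p) → #(univ.filter q) = #(univ.filter q') := by
    intro q q' _ _ h
    congr 1
    apply Finset.filter_congr
    intro p _
    exact h p
  rw [r1 (fun p => (G.Adj p.1 p.2 ∧ p.1 ∈ S) ∧ p.2 ∈ S)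
        (fun p => G.Adj p.1 p.2 ∧ p.1 ∈ S ∧ p.2 ∈ S) (by tauto),
      r1 (fun p => (G.Adj p.1 p.2 ∧ p.1 ∈ S) ∧ p.2 ∉ S)
        (fun p => G.Adj p.1 p.2 ∧ p.1 ∈ S ∧ p.2 ∉ S) (by tauto)] at hB
  rw [r1 (fun p => (G.Adj p.1 p.2 ∧ p.1 ∉ S) ∧ p.2 ∈ S)
        (fun p => G.Adj p.1 p.2 ∧ p.1 ∉ S ∧ p.2 ∈ S) (by tauto),
      r1 (fun p => (G.Adj p.1 p.2 ∧ p.1 ∉ S) ∧ p.2 ∉ S)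
        (fun p => G.Adj p.1 p.2 ∧ p.1 ∉ S ∧ p.2 ∉ S) (by tauto)] at hC
  omega

lemma mixed_bound₁ {V : Type*} [Fintype V] [DecidableEq V] (G : SimpleGraph V)
    [DecidableRel G.Adj] (S : Finset V) (D : ℕ)
    (hnb : ∀ v ∉ S, #(S.filter fun u => G.Adj v u) ≤ D) :
    #(univ.filter fun p : V × V => G.Adj p.1 p.2 ∧ p.1 ∈ S ∧ p.2 ∉ S) ≤ #(univ \ S) * D := by
  rw [Finset.card_eq_sum_card_fiberwise (f := fun p : V × V => p.2) (t := univ \ S)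
    (fun p hp => by simp only [Finset.mem_coe, Finset.mem_filter] at hp; simp [hp.2.2.2])]
  refine le_trans (Finset.sum_le_sum (g := fun _ => D) ?_) (by rw [Finset.sum_const, smul_eq_mul])
  intro v hv
  have hvS : v ∉ S := by simp at hv; exact hv
  refine le_trans (Finset.card_le_card_of_injOn (fun p => p.1)
    (fun p hp => ?_) (fun p hp q hq h => ?_)) (hnb v hvS)
  · simp only [Finset.mem_coe, Finset.mem_filter] at hp
    exact Finset.mem_filter.2 ⟨hp.1.2.2.1, by rw [← hp.2]; exact hp.1.2.1.symm⟩
  · simp only [Finset.coe_filter, Set.mem_setOf_eq] at hp hq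
    exact Prod.ext h (hp.2.trans hq.2.symm)

lemma mixed_bound₂ {V : Type*} [Fintype V] [DecidableEq V] (G : SimpleGraph V)
    [DecidableRel G.Adj] (S : Finset V) (D : ℕ)
    (hnb : ∀ v ∉ S, #(S.filter fun u => G.Adj v u) ≤ D) :
    #(univ.filter fun p : V × V => G.Adj p.1 p.2 ∧ p.1 ∉ S ∧ p.2 ∈ S) ≤ #(univ \ S) * D := by
  rw [Finset.card_eq_sum_card_fiberwise (f := fun p : V × V => p.1) (t := univ \ S)
    (fun p hp => by simp only [Finset.mem_coe, Finset.mem_filter] at hp; simp [hp.2.2.1])]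
  refine le_trans (Finset.sum_le_sum (g := fun _ => D) ?_) (by rw [Finset.sum_const, smul_eq_mul])
  intro v hv
  have hvS : v ∉ S := by simp at hv; exact hv
  refine le_trans (Finset.card_le_card_of_injOn (fun p => p.2)
    (fun p hp => ?_) (fun p hp q hq h => ?_)) (hnb v hvS)
  · simp only [Finset.mem_coe, Finset.mem_filter] at hp
    exact Finset.mem_filter.2 ⟨hp.1.2.2.2, by rw [← hp.2]; exact hp.1.2.1⟩
  · simp only [Finset.coe_filter, Set.mem_setOf_eq] at hp hq
    exact Prod.ext (hp.2.trans hq.2.symm) h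

lemma clique_pairs_bound {V : Type*} [Fintype V] [DecidableEq V] (G : SimpleGraph V)
    [DecidableRel G.Adj] (S : Finset V) :
    #(univ.filter fun p : V × V => G.Adj p.1 p.2 ∧ p.1 ∈ S ∧ p.2 ∈ S) + #S ≤ #S * #S := by
  rw [← prodNeCard S]
  have hsub : (univ.filter fun p : V × V => G.Adj p.1 p.2 ∧ p.1 ∈ S ∧ p.2 ∈ S)
      ⊆ (S ×ˢ S).filter fun p => p.1 ≠ p.2 := by
    intro p hp
    simp only [Finset.mem_filter, Finset.mem_univ, true_and, Finset.mem_product] at hp ⊢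
    exact ⟨⟨hp.2.1, hp.2.2⟩, G.ne_of_adj hp.1⟩
  exact Nat.add_le_add_right (Finset.card_le_card hsub) _

lemma outside_eq {V : Type*} [Fintype V] [DecidableEq V] (G : SimpleGraph V)
    [DecidableRel G.Adj] (S : Finset V) {m : ℕ} (e : {x // x ∈ univ \ S} ≃ Fin m)
    [DecidableRel (G.comap (fun i : Fin m => ((e.symm i : {x // x ∈ univ \ S}) : V))).Adj] :
    #(univ.filter fun p : V × V => G.Adj p.1 p.2 ∧ p.1 ∉ S ∧ p.2 ∉ S) =
    #(univ.filter fun p : Fin m × Fin m =>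
      (G.comap (fun i : Fin m => ((e.symm i : {x // x ∈ univ \ S}) : V))).Adj p.1 p.2) := by
  symm
  apply Finset.card_bij
    (fun (p : Fin m × Fin m) _ => (((e.symm p.1 : {x // x ∈ univ \ S}) : V),
      ((e.symm p.2 : {x // x ∈ univ \ S}) : V)))
  · intro p hp
    simp only [Finset.mem_filter, Finset.mem_univ, true_and, comap_adj] at hp ⊢
    refine ⟨hp, ?_, ?_⟩
    · have := (e.symm p.1).2; simp only [Finset.mem_sdiff] at this; exact this.2
    · have := (e.symm p.2).2; simp only [Finset.mem_sdiff] at this; exact this.2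
  · intro p _ q _ h
    rw [Prod.mk.injEq] at h
    have h1 := e.symm.injective (Subtype.coe_injective h.1)
    have h2 := e.symm.injective (Subtype.coe_injective h.2)
    exact Prod.ext h1 h2
  · intro p hp
    simp only [Finset.mem_filter, Finset.mem_univ, true_and] at hp
    refine ⟨(e ⟨p.1, by simp [hp.2.1]⟩, e ⟨p.2, by simp [hp.2.2]⟩), ?_, ?_⟩
    · simp only [Finset.mem_filter, Finset.mem_univ, true_and, comap_adj, Equiv.symm_apply_apply]
      exact hp.1
    · simp only [Equiv.symm_apply_apply]

lemma copy_comap {V W U : Type*} (G : SimpleGraph V) (H : SimpleGraph W) (g : U → V)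
    (hg : Function.Injective g) (h : ContainsCopy (G.comap g) H) : ContainsCopy G H := by
  obtain ⟨f, hf, hadj⟩ := h
  exact ⟨g ∘ f, hg.comp hf, fun a b hab => hadj a b hab⟩

lemma cliqueFree_no_copy {k n : ℕ} (hk : 4 ≤ k) (h0 : (0:ℕ) < k) (h1 : (1:ℕ) < k)
    (G : SimpleGraph (Fin n)) (hcf : G.CliqueFree (k-1)) :
    ¬ ContainsCopy G ((⊤ : SimpleGraph (Fin k)).deleteEdges
      {s((⟨0, h0⟩ : Fin k), (⟨1, h1⟩ : Fin k))}) := by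
  rintro ⟨f, hinj, hadj⟩
  set t := (Finset.univ.erase (⟨0, h0⟩ : Fin k)).image f with ht
  refine hcf t ⟨?_, ?_⟩
  · intro x hx y hy hxy
    simp only [ht, Finset.coe_image, Set.mem_image, Finset.mem_coe, Finset.mem_erase] at hx hy
    obtain ⟨i, ⟨hi0, -⟩, rfl⟩ := hx
    obtain ⟨j, ⟨hj0, -⟩, rfl⟩ := hy
    apply hadj
    rw [SimpleGraph.deleteEdges_adj]
    constructor
    · simp only [SimpleGraph.top_adj]
      exact fun h => hxy (by rw [h])
    · rw [Set.mem_singleton_iff, Sym2.eq_iff]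
      rintro (⟨rfl, rfl⟩ | ⟨rfl, rfl⟩)
      · exact hi0 rfl
      · exact hj0 rfl
  · rw [ht, Finset.card_image_of_injective _ hinj, Finset.card_erase_of_mem (Finset.mem_univ _),
      Finset.card_univ, Fintype.card_fin]

lemma dirac_bound {k : ℕ} (hk : 4 ≤ k) (h0 : (0:ℕ) < k) (h1 : (1:ℕ) < k) :
    ∀ (n : ℕ) (G : SimpleGraph (Fin n)) [DecidableRel G.Adj],
      ¬ ContainsCopy G ((⊤ : SimpleGraph (Fin k)).deleteEdges
        {s((⟨0, h0⟩ : Fin k), (⟨1, h1⟩ : Fin k))}) →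
      #G.edgeFinset ≤ (SimpleGraph.turanGraph n (k-2)).edgeSet.ncard
        + (if n = k-1 then 1 else 0) := by
  obtain ⟨K, rfl⟩ : ∃ K, k = K + 4 := ⟨k - 4, by omega⟩
  have hk1 : K + 4 - 1 = K + 3 := rfl
  have hk2 : K + 4 - 2 = K + 2 := rfl
  have hk3 : K + 4 - 3 = K + 1 := rfl
  intro n
  induction n using Nat.strong_induction_on with
  | _ n ih =>
  intro G _ hG
  rcases le_or_gt n (K + 3) with hn | hn
  · rcases lt_or_eq_of_le hn with hn2 | hn2
    · have htop : turanGraph n (K + 4 - 2) = ⊤ := by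
        rw [turanGraph_eq_top]; right; omega
      have hle : #G.edgeFinset ≤ #(⊤ : SimpleGraph (Fin n)).edgeFinset :=
        Finset.card_le_card (edgeFinset_subset_edgeFinset.2 le_top)
      have hbr := ncard_eq_card_edgeFinset (⊤ : SimpleGraph (Fin n))
      rw [htop, hbr]
      omega
    · have hpos : (0 : ℕ) < K + 2 := by omega
      have htf := turan_formula n (K + 2) hpos
      have hq : n / (K + 2) = 1 := by
        rw [hn2]
        rw [Nat.div_eq_of_lt_le] <;> omega
      have hs : n % (K + 2) = 1 := by
        have hdm := Nat.div_add_mod n (K + 2)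
        rw [hq, Nat.mul_one] at hdm
        omega
      rw [hq, hs] at htf
      have hdeg : ∑ v : Fin n, G.degree v ≤ n * (n - 1) := by
        calc ∑ v : Fin n, G.degree v ≤ ∑ _v : Fin n, (n - 1) := by
              apply Finset.sum_le_sum
              intro v _
              have := G.degree_lt_card_verts v
              rw [Fintype.card_fin] at this
              omega
        _ = n * (n - 1) := by
              rw [Finset.sum_const, Finset.card_univ, Fintype.card_fin, smul_eq_mul]
      rw [sum_degrees_eq_twice_card_edges] at hdeg
      rw [hk2, if_pos (by omega : n = K + 4 - 1)]
      have hnn : n * (n - 1) + n = n * n := by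
        obtain ⟨b, rfl⟩ : ∃ b, n = b + 1 := ⟨n - 1, by omega⟩
        simp only [Nat.add_sub_cancel]
        ring
      omega
  · by_cases hcf : G.CliqueFree (K + 4 - 1)
    · rw [hk1] at hcf
      have hcf' : G.CliqueFree (K + 2 + 1) := hcf
      have hmax := (isTuranMaximal_turanGraph (n := n) (r := K + 2) (by omega)).2 hcf'
      rw [hk2, if_neg (by omega), add_zero,
        ncard_eq_card_edgeFinset (turanGraph n (K + 2))]
      exact hmax
    · rw [CliqueFree] at hcf
      push_neg at hcf
      obtain ⟨S, hS⟩ := hcf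
      have hcS : #S = K + 3 := by rw [hS.2]; omega
      obtain ⟨m, hm⟩ : ∃ m, n = m + (K + 3) := ⟨n - (K + 3), by omega⟩
      have hmn : m < n := by omega
      have hSc : #(Finset.univ \ S) = m := by
        rw [Finset.card_sdiff_of_subset (Finset.subset_univ _), Finset.card_univ, Fintype.card_fin, hcS]
        omega
      set e : {x // x ∈ Finset.univ \ S} ≃ Fin m :=
        Fintype.equivFinOfCardEq (by rw [Fintype.card_coe]; exact hSc) with he
      set G' := G.comap (fun i : Fin m => ((e.symm i : {x // x ∈ Finset.univ \ S}) : Fin n))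
        with hG'
      have hG'free : ¬ ContainsCopy G' ((⊤ : SimpleGraph (Fin (K+4))).deleteEdges
          {s((⟨0, h0⟩ : Fin (K+4)), (⟨1, h1⟩ : Fin (K+4)))}) := by
        intro hcc
        exact hG (copy_comap G _ _ (Subtype.coe_injective.comp e.symm.injective) hcc)
      have hIH := ih m hmn G' hG'free
      have h4 := four_split G S
      have ha := clique_pairs_bound G S
      have hbnd : ∀ v ∉ S, #(S.filter fun u => G.Adj v u) ≤ K + 4 - 3 :=
        fun v hv => nbrs_le hk h0 h1 G hG S hS v hv
      rw [hk3] at hbnd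
      have hb := mixed_bound₁ G S (K + 1) hbnd
      have hc := mixed_bound₂ G S (K + 1) hbnd
      rw [hSc] at hb hc
      have hd := outside_eq G S e
      have h2' := two_mul_card_edgeFinset (G := G')
      have e0 : #(Finset.univ.filter fun (p : Fin m × Fin m) =>
          match p with | (x, y) => G'.Adj x y) =
          #(Finset.univ.filter fun p : Fin m × Fin m => G'.Adj p.1 p.2) := rfl
      rw [e0, ← hd] at h2'
      have htf_m := turan_formula m (K + 2) (by omega)
      have htf_n := turan_formula n (K + 2) (by omega)
      set E : ℕ := if m = K + 4 - 1 then 1 else 0 with hEdef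
      have hr2 : 2 ≤ K + 2 := by omega
      have hm1 : 1 ≤ m := by omega
      have ha1 : m = (K+2) * (m / (K + 2)) + m % (K + 2) := (Nat.div_add_mod m (K + 2)).symm
      have ha2 : m % (K + 2) < K + 2 := Nat.mod_lt _ (by omega)
      have ha3 : m + (K + 2) + 1 = (K+2) * (n / (K + 2)) + n % (K + 2) := by
        have hx := Nat.div_add_mod n (K + 2)
        omega
      have ha4 : n % (K + 2) < K + 2 := Nat.mod_lt _ (by omega)
      have ha5 : E ≤ 1 := by rw [hEdef]; split_ifs <;> omega
      have ha6 : E = 1 → m = (K + 2) + 1 := by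
        intro hE1
        rw [hEdef] at hE1
        by_cases hmm : m = K + 4 - 1
        · omega
        · rw [if_neg hmm] at hE1; omega
      have key := key_arith (K + 2) m (m / (K + 2)) (m % (K + 2)) (n / (K + 2)) (n % (K + 2)) E
        hr2 hm1 ha1 ha2 ha3 ha4 ha5 ha6
      rw [show m + (K + 2) + 1 = n from by omega] at key
      rw [show K + 2 - 1 = K + 1 from rfl] at key
      rw [hk2] at hIH ⊢
      rw [if_neg (by omega), add_zero]
      rw [hcS] at ha
      have hid1 : (K+3)*(K+3) = (K+2)*(K+3) + (K+3) := by ring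
      have hid2 : 2*m*(K+1) = m*(K+1) + m*(K+1) := by ring
      rw [ncard_eq_card_edgeFinset (turanGraph n (K + 2))] at htf_n ⊢
      rw [ncard_eq_card_edgeFinset (turanGraph m (K + 2))] at htf_m hIH
      linarith [h4, ha, hb, hc, h2', hIH, htf_m, htf_n, key, hid1, hid2]

end Aux

/-- Dirac: if `k ≥ 4` and `n ≥ k + 1`, then
`ex(K_n, K_k - e) = ex(K_n, K_{k-1}) = e(T_{n,k-2})`. -/
theorem dirac_ex_clique_minus_edge (k n : ℕ) (hk : 4 ≤ k) (hn : k + 1 ≤ n) :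
    exNumH n ((⊤ : SimpleGraph (Fin k)).deleteEdges
        {s((⟨0, by omega⟩ : Fin k), (⟨1, by omega⟩ : Fin k))}) = exNum n (k - 1) ∧
    exNum n (k - 1) = (SimpleGraph.turanGraph n (k - 2)).edgeSet.ncard := by
  have h0 : (0:ℕ) < k := by omega
  have h1 : (1:ℕ) < k := by omega
  have hk21 : k - 2 + 1 = k - 1 := by omega
  set tc := (SimpleGraph.turanGraph n (k - 2)).edgeSet.ncard with htc
  have hTfree : (SimpleGraph.turanGraph n (k - 2)).CliqueFree (k - 1) := by
    rw [← hk21]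
    exact turanGraph_cliqueFree (by omega)
  have hpart2 : exNum n (k - 1) = tc := by
    apply le_antisymm
    · apply csSup_le
      · exact ⟨tc, ⟨turanGraph n (k - 2), hTfree, rfl⟩⟩
      · rintro x ⟨H, hH, rfl⟩
        rw [← hk21] at hH
        have := (isTuranMaximal_turanGraph (n := n) (r := k - 2) (by omega)).2 hH
        rw [ncard_eq_card_edgeFinset H, htc, ncard_eq_card_edgeFinset (turanGraph n (k-2))]
        exact this
    · apply le_csSup
      · refine ⟨tc, ?_⟩
        rintro x ⟨H, hH, rfl⟩
        rw [← hk21] at hH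
        have := (isTuranMaximal_turanGraph (n := n) (r := k - 2) (by omega)).2 hH
        rw [ncard_eq_card_edgeFinset H, htc, ncard_eq_card_edgeFinset (turanGraph n (k-2))]
        exact this
      · exact ⟨turanGraph n (k - 2), hTfree, rfl⟩
  have hpart1 : exNumH n ((⊤ : SimpleGraph (Fin k)).deleteEdges
      {s((⟨0, h0⟩ : Fin k), (⟨1, h1⟩ : Fin k))}) = tc := by
    have hub : ∀ x ∈ {e | ∃ G : SimpleGraph (Fin n),
        ¬ ContainsCopy G ((⊤ : SimpleGraph (Fin k)).deleteEdges
          {s((⟨0, h0⟩ : Fin k), (⟨1, h1⟩ : Fin k))}) ∧ G.edgeSet.ncard = e}, x ≤ tc := by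
      rintro x ⟨G, hG, rfl⟩
      have hdb := dirac_bound hk h0 h1 n G hG
      rw [if_neg (by omega), add_zero] at hdb
      rw [ncard_eq_card_edgeFinset G, htc]
      exact hdb
    have hmem : tc ∈ {e | ∃ G : SimpleGraph (Fin n),
        ¬ ContainsCopy G ((⊤ : SimpleGraph (Fin k)).deleteEdges
          {s((⟨0, h0⟩ : Fin k), (⟨1, h1⟩ : Fin k))}) ∧ G.edgeSet.ncard = e} :=
      ⟨turanGraph n (k - 2), cliqueFree_no_copy hk h0 h1 _ hTfree, rfl⟩
    apply le_antisymm
    · exact csSup_le ⟨tc, hmem⟩ hub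
    · exact le_csSup ⟨tc, hub⟩ hmem
  exact ⟨hpart1.trans hpart2.symm, hpart2⟩
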